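/- Let α > 0, let T be an n-vertex tournament that is α-far from being transitive, and let σ be an ordering of V(T) that minimises the number of backward edges. Then T either (1) contains at least αn²/1000 backward edges in σ, each of length at least n/50, or (2) contains a subtournament of order at least n/20 that is 6α-far from being transitive. -/

import Mathlib

/-- `T` is a tournament: an orientation of the complete graph. -/
def IsTournament {V : Type*} (T : V → V → Prop) : Prop :=
  (∀ x, ¬ T x x) ∧ ∀ x y, x ≠ y → (T x y ↔ ¬ T y x)

/-- The unavoidable `t`-tournament `𝒰_t` on `Fin 3 × Fin t`: three transitive classes
of order `t`, with all edges from class `i` to class `i + 1` (mod 3). -/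
def UPat (t : ℕ) (p q : Fin 3 × Fin t) : Prop :=
  (p.1 = q.1 ∧ p.2 < q.2) ∨ q.1 = p.1 + 1

/-- `T` contains a copy of the unavoidable `t`-tournament `𝒰_t`. -/
def ContainsU {V : Type*} (T : V → V → Prop) (t : ℕ) : Prop :=
  ∃ f : Fin 3 × Fin t → V, Function.Injective f ∧
    ∀ p q : Fin 3 × Fin t, UPat t p q → T (f p) (f q)

/-- The number of backward edges of the ordering `σ` of the vertices of `T`
(position `k` is occupied by the vertex `σ k`). -/
noncomputable def backCount {n : ℕ} {V : Type*} (T : V → V → Prop) (σ : Fin n ≃ V) : ℕ :=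
  {p : Fin n × Fin n | p.1 < p.2 ∧ T (σ p.2) (σ p.1)}.ncard

open Finset
open scoped Classical
private lemma ncard_filter_eq {α : Type*} [Fintype α] (P : α → Prop) [DecidablePred P] :
    {x | P x}.ncard = (Finset.univ.filter P).card := by
  rw [← Set.ncard_coe_finset]; congr 1; ext x; simp
private def winEmb (n a m : ℕ) (h : a + m ≤ n) :
    Fin m ≃ {k : Fin n // a ≤ (k : ℕ) ∧ (k : ℕ) < a + m} where
  toFun i := ⟨⟨a + (i : ℕ), by have := i.isLt; omega⟩, by
    refine ⟨?_, ?_⟩ <;> · simp only [Fin.val_mk]; have := i.isLt; omega⟩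
  invFun s := ⟨(s.1 : ℕ) - a, by have := s.2; omega⟩
  left_inv i := by apply Fin.ext; simp
  right_inv s := by
    apply Subtype.ext; apply Fin.ext; have := s.2; simp; omega
private lemma perm_lt {n a m : ℕ} (π : Equiv.Perm (Fin n))
    (hW : ∀ k : Fin n, (a ≤ (π k : ℕ) ∧ (π k : ℕ) < a + m) ↔ (a ≤ (k:ℕ) ∧ (k:ℕ) < a + m))
    (hfix : ∀ k : Fin n, ¬(a ≤ (k:ℕ) ∧ (k:ℕ) < a + m) → π k = k)
    {k l : Fin n} (hkl : k < l)
    (hnb : ¬((a ≤ (k:ℕ) ∧ (k:ℕ) < a + m) ∧ (a ≤ (l:ℕ) ∧ (l:ℕ) < a + m))) :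
    π k < π l := by
  rw [Fin.lt_def] at hkl ⊢
  by_cases hk : a ≤ (k:ℕ) ∧ (k:ℕ) < a + m
  · have hl : ¬(a ≤ (l:ℕ) ∧ (l:ℕ) < a + m) := fun h => hnb ⟨hk, h⟩
    have h1 : (π l : ℕ) = (l : ℕ) := congrArg Fin.val (hfix l hl)
    have h2 := (hW k).mpr hk
    omega
  · have h1 : (π k : ℕ) = (k : ℕ) := congrArg Fin.val (hfix k hk)
    by_cases hl : a ≤ (l:ℕ) ∧ (l:ℕ) < a + m
    · have h2 := (hW l).mpr hl
      omega
    · have h2 : (π l : ℕ) = (l : ℕ) := congrArg Fin.val (hfix l hl)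
      omega


private lemma card_in {n m a : ℕ} (T : Fin n → Fin n → Prop) (σ ρ : Equiv.Perm (Fin n))
    (τ : Equiv.Perm (Fin m)) (hm : 0 < m)
    (halt : ∀ i : Fin m, a + (i : ℕ) < n) (hτlt : ∀ i : Fin m, a + (τ i : ℕ) < n)
    (happly' : ∀ i : Fin m, ρ ⟨a + (i:ℕ), halt i⟩ = ⟨a + (τ i : ℕ), hτlt i⟩) :
    (univ.filter (fun p : Fin n × Fin n =>
        (p.1 < p.2 ∧ T (σ (ρ p.2)) (σ (ρ p.1))) ∧
        ((a ≤ (p.1:ℕ) ∧ (p.1:ℕ) < a + m) ∧ (a ≤ (p.2:ℕ) ∧ (p.2:ℕ) < a + m)))).card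
      = (univ.filter (fun q : Fin m × Fin m => q.1 < q.2 ∧
          T (σ ⟨a + (τ q.2 : ℕ), hτlt q.2⟩) (σ ⟨a + (τ q.1 : ℕ), hτlt q.1⟩))).card := by
  classical
  apply Finset.card_nbij' (i := fun p : Fin n × Fin n =>
      ((⟨((p.1:ℕ) - a) % m, Nat.mod_lt _ hm⟩ : Fin m), (⟨((p.2:ℕ) - a) % m, Nat.mod_lt _ hm⟩ : Fin m)))
    (j := fun q : Fin m × Fin m => ((⟨a + (q.1:ℕ), halt q.1⟩ : Fin n), (⟨a + (q.2:ℕ), halt q.2⟩ : Fin n)))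
  · intro p hp
    simp only [mem_coe, mem_filter, mem_univ, true_and] at hp ⊢
    obtain ⟨⟨hlt, hTp⟩, hb1, hb2⟩ := hp
    have e1 : ((p.1:ℕ) - a) % m = (p.1:ℕ) - a := Nat.mod_eq_of_lt (by omega)
    have e2 : ((p.2:ℕ) - a) % m = (p.2:ℕ) - a := Nat.mod_eq_of_lt (by omega)
    rw [Fin.lt_def] at hlt
    have k1 : p.1 = ⟨a + ((⟨((p.1:ℕ) - a) % m, Nat.mod_lt _ hm⟩ : Fin m) : ℕ), halt _⟩ :=
      Fin.ext (by simp only [Fin.val_mk]; rw [e1]; omega)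
    have k2 : p.2 = ⟨a + ((⟨((p.2:ℕ) - a) % m, Nat.mod_lt _ hm⟩ : Fin m) : ℕ), halt _⟩ :=
      Fin.ext (by simp only [Fin.val_mk]; rw [e2]; omega)
    have key1 : ρ p.1 = ⟨a + ((τ ⟨((p.1:ℕ) - a) % m, Nat.mod_lt _ hm⟩ : Fin m) : ℕ), hτlt _⟩ := by
      conv_lhs => rw [k1]
      exact happly' _
    have key2 : ρ p.2 = ⟨a + ((τ ⟨((p.2:ℕ) - a) % m, Nat.mod_lt _ hm⟩ : Fin m) : ℕ), hτlt _⟩ := by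
      conv_lhs => rw [k2]
      exact happly' _
    rw [key1, key2] at hTp
    refine ⟨?_, hTp⟩
    rw [Fin.lt_def]
    simp only [Fin.val_mk]
    rw [e1, e2]
    omega
  · intro q hq
    simp only [mem_coe, mem_filter, mem_univ, true_and] at hq ⊢
    obtain ⟨hlt, hTq⟩ := hq
    rw [Fin.lt_def] at hlt
    have w1 : a ≤ a + (q.1:ℕ) ∧ a + (q.1:ℕ) < a + m := ⟨Nat.le_add_right _ _, by have := q.1.isLt; omega⟩
    have w2 : a ≤ a + (q.2:ℕ) ∧ a + (q.2:ℕ) < a + m := ⟨Nat.le_add_right _ _, by have := q.2.isLt; omega⟩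
    refine ⟨⟨?_, ?_⟩, w1, w2⟩
    · rw [Fin.lt_def]
      simp only [Fin.val_mk]
      omega
    · rw [happly', happly']
      exact hTq
  · intro p hp
    simp only [mem_coe, mem_filter, mem_univ, true_and] at hp
    obtain ⟨⟨hlt, hTp⟩, hb1, hb2⟩ := hp
    simp only [Prod.ext_iff]
    have e1 : ((p.1:ℕ) - a) % m = (p.1:ℕ) - a := Nat.mod_eq_of_lt (by omega)
    have e2 : ((p.2:ℕ) - a) % m = (p.2:ℕ) - a := Nat.mod_eq_of_lt (by omega)
    refine ⟨?_, ?_⟩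
    · apply Fin.ext; simp only [Fin.val_mk]; rw [e1]; omega
    · apply Fin.ext; simp only [Fin.val_mk]; rw [e2]; omega
  · intro q hq
    simp only [Prod.ext_iff]
    refine ⟨?_, ?_⟩
    · apply Fin.ext; simp only [Fin.val_mk, Nat.add_sub_cancel_left]
      exact Nat.mod_eq_of_lt (Fin.is_lt _)
    · apply Fin.ext; simp only [Fin.val_mk, Nat.add_sub_cancel_left]
      exact Nat.mod_eq_of_lt (Fin.is_lt _)

private lemma card_out {n m a : ℕ} (T : Fin n → Fin n → Prop) (σ ρ : Equiv.Perm (Fin n))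
    (hW : ∀ k : Fin n, (a ≤ (ρ k : ℕ) ∧ (ρ k : ℕ) < a + m) ↔ (a ≤ (k:ℕ) ∧ (k:ℕ) < a + m))
    (hfix : ∀ k : Fin n, ¬(a ≤ (k:ℕ) ∧ (k:ℕ) < a + m) → ρ k = k)
    (hW' : ∀ k : Fin n, (a ≤ (ρ.symm k : ℕ) ∧ (ρ.symm k : ℕ) < a + m) ↔ (a ≤ (k:ℕ) ∧ (k:ℕ) < a + m))
    (hfix' : ∀ k : Fin n, ¬(a ≤ (k:ℕ) ∧ (k:ℕ) < a + m) → ρ.symm k = k) :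
    (univ.filter (fun p : Fin n × Fin n =>
        (p.1 < p.2 ∧ T (σ (ρ p.2)) (σ (ρ p.1))) ∧
        ¬((a ≤ (p.1:ℕ) ∧ (p.1:ℕ) < a + m) ∧ (a ≤ (p.2:ℕ) ∧ (p.2:ℕ) < a + m)))).card
      = (univ.filter (fun p : Fin n × Fin n =>
          ¬((a ≤ (p.1:ℕ) ∧ (p.1:ℕ) < a + m) ∧ (a ≤ (p.2:ℕ) ∧ (p.2:ℕ) < a + m))
          ∧ (p.1 < p.2 ∧ T (σ p.2) (σ p.1)))).card := by
  classical
  apply Finset.card_nbij' (i := fun p : Fin n × Fin n => (ρ p.1, ρ p.2))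
    (j := fun p : Fin n × Fin n => (ρ.symm p.1, ρ.symm p.2))
  · intro p hp
    simp only [mem_coe, mem_filter, mem_univ, true_and] at hp ⊢
    obtain ⟨⟨hlt, hTp⟩, hnb⟩ := hp
    have horder : ρ p.1 < ρ p.2 := perm_lt ρ hW hfix hlt hnb
    refine ⟨?_, horder, hTp⟩
    intro hc
    exact hnb ⟨(hW p.1).mp hc.1, (hW p.2).mp hc.2⟩
  · intro p hp
    simp only [mem_coe, mem_filter, mem_univ, true_and] at hp ⊢
    obtain ⟨hnb, hlt, hTp⟩ := hp
    have hnb2 : ¬((a ≤ (ρ.symm p.1 : ℕ) ∧ (ρ.symm p.1 : ℕ) < a + m)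
        ∧ (a ≤ (ρ.symm p.2 : ℕ) ∧ (ρ.symm p.2 : ℕ) < a + m)) := by
      intro hc
      exact hnb ⟨(hW' p.1).mp hc.1, (hW' p.2).mp hc.2⟩
    have horder : ρ.symm p.1 < ρ.symm p.2 := perm_lt ρ.symm hW' hfix' hlt hnb
    refine ⟨⟨horder, ?_⟩, hnb2⟩
    rw [Equiv.apply_symm_apply, Equiv.apply_symm_apply]
    exact hTp
  · intro p hp
    simp [Prod.ext_iff]
  · intro p hp
    simp [Prod.ext_iff]

set_option maxHeartbeats 1000000 in
private lemma decompose {n : ℕ} (T : Fin n → Fin n → Prop) (σ : Equiv.Perm (Fin n))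
    {a m : ℕ} (h : a + m ≤ n) (hm : 0 < m) (τ : Equiv.Perm (Fin m)) :
    backCount T ((τ.extendDomain (winEmb n a m h)).trans σ)
      = {p : Fin n × Fin n |
          ¬((a ≤ (p.1:ℕ) ∧ (p.1:ℕ) < a + m) ∧ (a ≤ (p.2:ℕ) ∧ (p.2:ℕ) < a + m))
          ∧ (p.1 < p.2 ∧ T (σ p.2) (σ p.1))}.ncard
        + backCount (fun i j : Fin m =>
            T (σ ⟨a + (i:ℕ), by have := i.isLt; omega⟩)
              (σ ⟨a + (j:ℕ), by have := j.isLt; omega⟩)) τ := by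
  set ρ : Equiv.Perm (Fin n) := τ.extendDomain (winEmb n a m h) with hρ
  have hfix : ∀ k : Fin n, ¬(a ≤ (k:ℕ) ∧ (k:ℕ) < a + m) → ρ k = k := fun k hk =>
    Equiv.Perm.extendDomain_apply_not_subtype τ (winEmb n a m h) hk
  have happly : ∀ (x : ℕ) (hx : a ≤ x ∧ x < a + m) (hxn : x < n),
      ρ ⟨x, hxn⟩ = ⟨a + (τ ⟨x - a, by omega⟩ : Fin m), by
        have := (τ ⟨x - a, by omega⟩).isLt; omega⟩ := by
    intro x hx hxn
    rw [hρ, Equiv.Perm.extendDomain_apply_subtype τ (winEmb n a m h) hx]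
    have e1 : ((winEmb n a m h).symm ⟨⟨x, hxn⟩, hx⟩) = ⟨x - a, by omega⟩ := by
      apply Fin.ext; simp [winEmb]
    rw [e1]
    rfl
  have hW : ∀ k : Fin n, (a ≤ (ρ k : ℕ) ∧ (ρ k : ℕ) < a + m) ↔ (a ≤ (k:ℕ) ∧ (k:ℕ) < a + m) := by
    intro k
    constructor
    · intro hk
      by_contra hc
      rw [hfix k hc] at hk
      exact hc hk
    · intro hk
      rw [happly (k:ℕ) hk k.isLt]
      have := (τ ⟨(k:ℕ) - a, by omega⟩ : Fin m).isLt
      constructor <;> simp only [Fin.val_mk] <;> omega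
  have hfix' : ∀ k : Fin n, ¬(a ≤ (k:ℕ) ∧ (k:ℕ) < a + m) → ρ.symm k = k := by
    intro k hk
    have h1 : ¬(a ≤ (ρ.symm k : ℕ) ∧ (ρ.symm k : ℕ) < a + m) := by
      intro hc
      have := (hW (ρ.symm k)).mpr hc
      rw [Equiv.apply_symm_apply] at this
      exact hk this
    have h2 := hfix _ h1
    rw [Equiv.apply_symm_apply] at h2
    exact h2.symm
  have hW' : ∀ k : Fin n, (a ≤ (ρ.symm k : ℕ) ∧ (ρ.symm k : ℕ) < a + m) ↔ (a ≤ (k:ℕ) ∧ (k:ℕ) < a + m) := by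
    intro k
    conv_rhs => rw [← Equiv.apply_symm_apply ρ k]
    exact (hW _).symm
  have hτlt : ∀ i : Fin m, a + (τ i : ℕ) < n := by
    intro i; have := (τ i).isLt; omega
  have halt : ∀ i : Fin m, a + (i : ℕ) < n := by
    intro i; have := i.isLt; omega
  have happly' : ∀ i : Fin m, ρ ⟨a + (i:ℕ), halt i⟩ = ⟨a + (τ i : ℕ), hτlt i⟩ := by
    intro i
    have w : a ≤ a + (i:ℕ) ∧ a + (i:ℕ) < a + m := ⟨Nat.le_add_right _ _, by have := i.isLt; omega⟩
    rw [happly (a + (i:ℕ)) w (halt i)]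
    have e : (⟨a + (i:ℕ) - a, by have := i.isLt; omega⟩ : Fin m) = i :=
      Fin.ext (by simp only [Fin.val_mk]; omega)
    apply Fin.ext
    simp only [Fin.val_mk]
    rw [e]
  have hbc : backCount T (ρ.trans σ)
      = (univ.filter (fun p : Fin n × Fin n => p.1 < p.2 ∧ T (σ (ρ p.2)) (σ (ρ p.1)))).card :=
    ncard_filter_eq _
  have hbc2 : backCount (fun i j : Fin m =>
            T (σ ⟨a + (i:ℕ), by have := i.isLt; omega⟩)
              (σ ⟨a + (j:ℕ), by have := j.isLt; omega⟩)) τ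
      = (univ.filter (fun q : Fin m × Fin m => q.1 < q.2 ∧
          T (σ ⟨a + (τ q.2 : ℕ), hτlt q.2⟩) (σ ⟨a + (τ q.1 : ℕ), hτlt q.1⟩))).card :=
    ncard_filter_eq _
  have hout : {p : Fin n × Fin n |
          ¬((a ≤ (p.1:ℕ) ∧ (p.1:ℕ) < a + m) ∧ (a ≤ (p.2:ℕ) ∧ (p.2:ℕ) < a + m))
          ∧ (p.1 < p.2 ∧ T (σ p.2) (σ p.1))}.ncard
      = (univ.filter (fun p : Fin n × Fin n =>
          ¬((a ≤ (p.1:ℕ) ∧ (p.1:ℕ) < a + m) ∧ (a ≤ (p.2:ℕ) ∧ (p.2:ℕ) < a + m))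
          ∧ (p.1 < p.2 ∧ T (σ p.2) (σ p.1)))).card :=
    ncard_filter_eq _
  have key := Finset.card_filter_add_card_filter_not
    (s := univ.filter (fun p : Fin n × Fin n => p.1 < p.2 ∧ T (σ (ρ p.2)) (σ (ρ p.1))))
    (p := fun p : Fin n × Fin n => (a ≤ (p.1:ℕ) ∧ (p.1:ℕ) < a + m) ∧ (a ≤ (p.2:ℕ) ∧ (p.2:ℕ) < a + m))
  rw [Finset.filter_filter, Finset.filter_filter] at key
  rw [hbc, hbc2, hout, ← key,
    card_in T σ ρ τ hm halt hτlt happly',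
    card_out T σ ρ hW hfix hW' hfix']
  exact Nat.add_comm _ _


set_option maxHeartbeats 1600000 in
/-- **Lemma.** If `T` is an `n`-vertex tournament that is `α`-far from transitive and `σ`
minimises the number of backward edges, then `T` either has at least `αn²/1000` backward
edges in `σ` of length at least `n/50`, or a subtournament of order at least `n/20` that
is `6α`-far from transitive. -/
theorem statement4 (α : ℝ) (hα : 0 < α) (n : ℕ) (T : Fin n → Fin n → Prop)
    (hT : IsTournament T)
    (hfar : ∀ τ : Equiv.Perm (Fin n), α * (n : ℝ) ^ 2 ≤ (backCount T τ : ℝ))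
    (σ : Equiv.Perm (Fin n))
    (hmin : ∀ τ : Equiv.Perm (Fin n), backCount T σ ≤ backCount T τ) :
    (α * (n : ℝ) ^ 2 / 1000 ≤
      (({p : Fin n × Fin n | p.1 < p.2 ∧ T (σ p.2) (σ p.1) ∧
          (n : ℝ) / 50 ≤ (((p.2 : ℕ) - (p.1 : ℕ) : ℕ) : ℝ)}).ncard : ℝ)) ∨
    (∃ (m : ℕ) (f : Fin m → Fin n), Function.Injective f ∧ (n : ℝ) / 20 ≤ (m : ℝ) ∧
      ∀ τ : Equiv.Perm (Fin m),
        6 * α * (m : ℝ) ^ 2 ≤ (backCount (fun i j => T (f i) (f j)) τ : ℝ)) := by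
  have hBE : backCount T σ
      = (univ.filter (fun p : Fin n × Fin n => p.1 < p.2 ∧ T (σ p.2) (σ p.1))).card :=
    ncard_filter_eq _
  have hLong : ({p : Fin n × Fin n | p.1 < p.2 ∧ T (σ p.2) (σ p.1) ∧
          (n : ℝ) / 50 ≤ (((p.2 : ℕ) - (p.1 : ℕ) : ℕ) : ℝ)}).ncard
      = (univ.filter (fun p : Fin n × Fin n => p.1 < p.2 ∧ T (σ p.2) (σ p.1) ∧
          (n : ℝ) / 50 ≤ (((p.2 : ℕ) - (p.1 : ℕ) : ℕ) : ℝ))).card := ncard_filter_eq _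
  set BE := univ.filter (fun p : Fin n × Fin n => p.1 < p.2 ∧ T (σ p.2) (σ p.1)) with hBEdef
  set LG := univ.filter (fun p : Fin n × Fin n => p.1 < p.2 ∧ T (σ p.2) (σ p.1) ∧
          (n : ℝ) / 50 ≤ (((p.2 : ℕ) - (p.1 : ℕ) : ℕ) : ℝ)) with hLGdef
  by_cases hL : α * (n:ℝ)^2 / 1000 ≤ (LG.card : ℝ)
  · left
    rw [hLong]
    exact hL
  right
  push_neg at hL
  have hBcard : α * (n:ℝ)^2 ≤ (BE.card : ℝ) := by rw [← hBE]; exact hfar σ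
  have hsub : LG ⊆ BE := by
    intro p hp
    simp only [hLGdef, hBEdef, mem_filter, mem_univ, true_and] at hp ⊢
    exact ⟨hp.1, hp.2.1⟩
  have hn51 : 51 ≤ n := by
    by_contra hc
    push_neg at hc
    have hBL : BE ⊆ LG := by
      intro p hp
      simp only [hLGdef, hBEdef, mem_filter, mem_univ, true_and] at hp ⊢
      refine ⟨hp.1, hp.2, ?_⟩
      have h1 : (1:ℕ) ≤ (p.2:ℕ) - (p.1:ℕ) := by
        have h2 := hp.1; rw [Fin.lt_def] at h2; omega
      have h2 : (1:ℝ) ≤ ((((p.2:ℕ) - (p.1:ℕ)):ℕ):ℝ) := by exact_mod_cast h1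
      have h3 : (n:ℝ) ≤ 50 := by exact_mod_cast (by omega : n ≤ 50)
      linarith
    have hle : (BE.card : ℝ) ≤ LG.card := by exact_mod_cast Finset.card_le_card hBL
    nlinarith [sq_nonneg (n:ℝ)]
  -- quantities
  set m : ℕ := (n + 19) / 20 with hmdef
  set d : ℕ := (n - 1) / 50 with hddef
  have hm20 : n ≤ 20 * m ∧ 20 * m ≤ n + 19 := by
    constructor <;>
      · have h1 := Nat.div_add_mod (n+19) 20
        have h2 := Nat.mod_lt (n+19) (show 0 < 20 by norm_num)
        omega
  have hd50 : 50 * d ≤ n - 1 := by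
    have h1 := Nat.div_add_mod (n-1) 50
    omega
  have hdm : d < m := by omega
  have hmn : m ≤ n := by omega
  have hm0 : 0 < m := by omega
  -- short edges
  set SS := BE \ LG with hSSdef
  have hSS : ∀ p ∈ SS, p.1 < p.2 ∧ T (σ p.2) (σ p.1) ∧ (p.2:ℕ) - (p.1:ℕ) ≤ d := by
    intro p hp
    rw [hSSdef, Finset.mem_sdiff] at hp
    obtain ⟨hp1, hp2⟩ := hp
    rw [hBEdef, mem_filter] at hp1
    rw [hLGdef, mem_filter] at hp2
    refine ⟨hp1.2.1, hp1.2.2, ?_⟩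
    have hnl : ¬ ((n:ℝ)/50 ≤ (((p.2:ℕ) - (p.1:ℕ) : ℕ):ℝ)) := by
      intro hcc
      exact hp2 ⟨mem_univ _, hp1.2.1, hp1.2.2, hcc⟩
    push_neg at hnl
    have h5 : ((((p.2:ℕ) - (p.1:ℕ)):ℕ):ℝ) * 50 < n := (lt_div_iff₀ (by norm_num)).mp hnl
    have h6 : ((p.2:ℕ) - (p.1:ℕ)) * 50 < n := by exact_mod_cast h5
    exact (Nat.le_div_iff_mul_le (show 0 < 50 by norm_num)).mpr (by omega)
  have hLle : LG.card ≤ BE.card := Finset.card_le_card hsub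
  have hSSc : SS.card = BE.card - LG.card := Finset.card_sdiff_of_subset hsub
  have hSreal : α * (n:ℝ)^2 - α * (n:ℝ)^2/1000 ≤ (SS.card : ℝ) := by
    have h7 : (SS.card : ℝ) = (BE.card : ℝ) - LG.card := by
      rw [hSSc, Nat.cast_sub hLle]
    rw [h7]; linarith
  -- windows
  set K : ℕ := n + m - 1 with hKdef
  set astart : ℕ → ℕ := fun s => min (n - m) (s - (m - 1)) with hastart
  have hcover : ∀ p ∈ SS, (m - d) ≤ ((Finset.range K).filter
      (fun s => astart s ≤ (p.1:ℕ) ∧ (p.2:ℕ) < astart s + m)).card := by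
    intro p hp
    obtain ⟨hlt, -, hlen⟩ := hSS p hp
    rw [Fin.lt_def] at hlt
    have hp2n := p.2.isLt
    have hp1n := p.1.isLt
    have hsubs : Finset.Icc (p.2:ℕ) ((p.1:ℕ) + m - 1) ⊆ (Finset.range K).filter
        (fun s => astart s ≤ (p.1:ℕ) ∧ (p.2:ℕ) < astart s + m) := by
      intro s hs
      rw [Finset.mem_Icc] at hs
      rw [mem_filter, Finset.mem_range]
      have hmin1 : astart s ≤ s - (m-1) := min_le_right _ _
      have hmin2 : astart s ≤ n - m := min_le_left _ _
      have hmin3 : astart s = n - m ∨ astart s = s - (m-1) := min_choice _ _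
      refine ⟨by omega, by omega, by omega⟩
    calc m - d ≤ (Finset.Icc (p.2:ℕ) ((p.1:ℕ) + m - 1)).card := by
          rw [Nat.card_Icc]; omega
      _ ≤ _ := Finset.card_le_card hsubs
  have hsum : (m - d) * SS.card ≤ ∑ s ∈ Finset.range K,
      ((SS.filter (fun p => astart s ≤ (p.1:ℕ) ∧ (p.2:ℕ) < astart s + m)).card) := by
    have swap : ∑ s ∈ Finset.range K,
        ((SS.filter (fun p => astart s ≤ (p.1:ℕ) ∧ (p.2:ℕ) < astart s + m)).card)
        = ∑ p ∈ SS,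
          ((Finset.range K).filter (fun s => astart s ≤ (p.1:ℕ) ∧ (p.2:ℕ) < astart s + m)).card := by
      simp only [Finset.card_filter]
      rw [Finset.sum_comm]
    rw [swap]
    calc (m-d) * SS.card = ∑ _p ∈ SS, (m-d) := by rw [Finset.sum_const, smul_eq_mul, mul_comm]
      _ ≤ _ := Finset.sum_le_sum hcover
  have hK0 : 0 < K := by omega
  obtain ⟨s0, hs0mem, hs0⟩ : ∃ s ∈ Finset.range K, (m-d) * SS.card
      ≤ K * (SS.filter (fun p => astart s ≤ (p.1:ℕ) ∧ (p.2:ℕ) < astart s + m)).card := by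
    apply Finset.exists_le_of_sum_le (Finset.nonempty_range_iff.mpr (by omega))
    calc ∑ _s ∈ Finset.range K, (m-d) * SS.card = K * ((m-d) * SS.card) := by
          rw [Finset.sum_const, smul_eq_mul, Finset.card_range]
      _ ≤ K * ∑ s ∈ Finset.range K,
          ((SS.filter (fun p => astart s ≤ (p.1:ℕ) ∧ (p.2:ℕ) < astart s + m)).card) :=
          Nat.mul_le_mul_left K hsum
      _ = ∑ s ∈ Finset.range K, K *
          ((SS.filter (fun p => astart s ≤ (p.1:ℕ) ∧ (p.2:ℕ) < astart s + m)).card) := by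
          rw [Finset.mul_sum]
  set a0 : ℕ := astart s0 with ha0def
  set EW := SS.filter (fun p => a0 ≤ (p.1:ℕ) ∧ (p.2:ℕ) < a0 + m) with hEWdef
  have ha0 : a0 + m ≤ n := by
    have h8 : a0 ≤ n - m := min_le_left _ _
    omega
  refine ⟨m, fun i : Fin m => σ ⟨a0 + (i:ℕ), by have := i.isLt; omega⟩, ?_, ?_, ?_⟩
  · intro i j hij
    have h9 := σ.injective hij
    have h10 := congrArg Fin.val h9
    simp only [Fin.val_mk] at h10
    exact Fin.ext (by omega)
  · have h11 : (n:ℝ) ≤ 20*(m:ℝ) := by exact_mod_cast hm20.1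
    linarith
  intro τ
  -- decomposition and minimality
  have hd1 := decompose T σ ha0 hm0 (1 : Equiv.Perm (Fin m))
  have hd2 := decompose T σ ha0 hm0 τ
  rw [Equiv.Perm.extendDomain_one] at hd1
  have hone : ((1 : Equiv.Perm (Fin n)).trans σ) = σ := by
    ext x
    simp
  rw [hone] at hd1
  have hmin2 := hmin ((τ.extendDomain (winEmb n a0 m ha0)).trans σ)
  rw [hd2, hd1] at hmin2
  have hii : backCount (fun i j : Fin m =>
      T (σ ⟨a0 + (i:ℕ), by have := i.isLt; omega⟩)
        (σ ⟨a0 + (j:ℕ), by have := j.isLt; omega⟩)) (1 : Equiv.Perm (Fin m))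
      ≤ backCount (fun i j : Fin m =>
      T (σ ⟨a0 + (i:ℕ), by have := i.isLt; omega⟩)
        (σ ⟨a0 + (j:ℕ), by have := j.isLt; omega⟩)) τ := by omega
  -- EW.card ≤ backCount 1
  have hEWle : EW.card ≤ backCount (fun i j : Fin m =>
      T (σ ⟨a0 + (i:ℕ), by have := i.isLt; omega⟩)
        (σ ⟨a0 + (j:ℕ), by have := j.isLt; omega⟩)) (1 : Equiv.Perm (Fin m)) := by
    have hbc1 : backCount (fun i j : Fin m =>
        T (σ ⟨a0 + (i:ℕ), by have := i.isLt; omega⟩)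
          (σ ⟨a0 + (j:ℕ), by have := j.isLt; omega⟩)) (1 : Equiv.Perm (Fin m))
        = (univ.filter (fun q : Fin m × Fin m => q.1 < q.2 ∧
            T (σ ⟨a0 + (q.2:ℕ), by have := q.2.isLt; omega⟩)
              (σ ⟨a0 + (q.1:ℕ), by have := q.1.isLt; omega⟩))).card := ncard_filter_eq _
    rw [hbc1]
    apply Finset.card_le_card_of_injOn (fun p : Fin n × Fin n =>
      ((⟨((p.1:ℕ) - a0) % m, Nat.mod_lt _ hm0⟩ : Fin m),
       (⟨((p.2:ℕ) - a0) % m, Nat.mod_lt _ hm0⟩ : Fin m)))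
    · intro p hp
      rw [hEWdef, mem_coe, mem_filter] at hp
      obtain ⟨hpS, hw1, hw2⟩ := hp
      obtain ⟨hlt, hback, -⟩ := hSS p hpS
      rw [Fin.lt_def] at hlt
      have e1 : ((p.1:ℕ) - a0) % m = (p.1:ℕ) - a0 := Nat.mod_eq_of_lt (by omega)
      have e2 : ((p.2:ℕ) - a0) % m = (p.2:ℕ) - a0 := Nat.mod_eq_of_lt (by omega)
      rw [mem_coe, mem_filter]
      refine ⟨mem_univ _, ?_, ?_⟩
      · rw [Fin.lt_def]
        simp only [Fin.val_mk]
        rw [e1, e2]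
        omega
      · have k2 : (⟨a0 + ((((p.2:ℕ) - a0) % m : ℕ)), by
            have := Nat.mod_lt ((p.2:ℕ) - a0) hm0; omega⟩ : Fin n) = p.2 :=
          Fin.ext (by simp only [Fin.val_mk]; rw [e2]; omega)
        have k1 : (⟨a0 + ((((p.1:ℕ) - a0) % m : ℕ)), by
            have := Nat.mod_lt ((p.1:ℕ) - a0) hm0; omega⟩ : Fin n) = p.1 :=
          Fin.ext (by simp only [Fin.val_mk]; rw [e1]; omega)
        rw [k1, k2]
        exact hback
    · intro p hp q hq heq
      rw [hEWdef] at hp hq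
      simp only [coe_filter, Set.mem_setOf_eq] at hp hq
      obtain ⟨hpS, hw1, hw2⟩ := hp
      obtain ⟨hqS, hv1, hv2⟩ := hq
      have hplt := (hSS p hpS).1
      have hqlt := (hSS q hqS).1
      rw [Fin.lt_def] at hplt hqlt
      have e1 : ((p.1:ℕ) - a0) % m = (p.1:ℕ) - a0 := Nat.mod_eq_of_lt (by omega)
      have e2 : ((p.2:ℕ) - a0) % m = (p.2:ℕ) - a0 := Nat.mod_eq_of_lt (by omega)
      have e3 : ((q.1:ℕ) - a0) % m = (q.1:ℕ) - a0 := Nat.mod_eq_of_lt (by omega)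
      have e4 : ((q.2:ℕ) - a0) % m = (q.2:ℕ) - a0 := Nat.mod_eq_of_lt (by omega)
      rw [Prod.ext_iff] at heq ⊢
      obtain ⟨g1, g2⟩ := heq
      have g1' := congrArg Fin.val g1
      have g2' := congrArg Fin.val g2
      simp only [Fin.val_mk] at g1' g2'
      rw [e1, e3] at g1'
      rw [e2, e4] at g2'
      exact ⟨Fin.ext (by omega), Fin.ext (by omega)⟩
  -- final arithmetic
  have hcast : ((m-d:ℕ):ℝ) * (SS.card:ℝ) ≤ (K:ℝ) * (EW.card:ℝ) := by exact_mod_cast hs0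
  have hmd : ((m-d:ℕ):ℝ) = (m:ℝ) - (d:ℝ) := by
    rw [Nat.cast_sub (le_of_lt hdm)]
  have hKr : (K:ℝ) = (n:ℝ) + (m:ℝ) - 1 := by
    rw [hKdef, Nat.cast_sub (by omega : 1 ≤ n + m)]
    push_cast
    ring
  have hmdlb : (3*(n:ℝ) + 2) / 100 ≤ (m:ℝ) - (d:ℝ) := by
    have h12 : 3*n + 2 + 100*d ≤ 100*m := by omega
    have h13 : 3*(n:ℝ) + 2 + 100*(d:ℝ) ≤ 100*(m:ℝ) := by exact_mod_cast h12
    linarith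
  have hmub : 20*(m:ℝ) ≤ (n:ℝ) + 19 := by exact_mod_cast hm20.2
  have hmlb : (n:ℝ) ≤ 20*(m:ℝ) := by exact_mod_cast hm20.1
  have hnr : (51:ℝ) ≤ (n:ℝ) := by exact_mod_cast hn51
  have hS999 : (999/1000) * (α * (n:ℝ)^2) ≤ (SS.card:ℝ) := by linarith
  have hKpos : (0:ℝ) < (K:ℝ) := by exact_mod_cast hK0
  have hmpos : (0:ℝ) ≤ (m:ℝ) := by positivity
  have hnn : (0:ℝ) ≤ (n:ℝ) := by positivity
  have hpoly : 6*(m:ℝ)^2*((n:ℝ)+(m:ℝ)-1) ≤ ((3*(n:ℝ)+2)/100) * ((999/1000) * (n:ℝ)^2) := by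
    have hq : (m:ℝ) ≤ ((n:ℝ)+19)/20 := by linarith
    have hstep : (m:ℝ)^2*((n:ℝ)+(m:ℝ)-1) ≤ (((n:ℝ)+19)/20)^2*((n:ℝ)+((n:ℝ)+19)/20-1) := by
      nlinarith [mul_nonneg hmpos hmpos, mul_nonneg (sub_nonneg.mpr hq) hmpos,
        mul_nonneg (mul_nonneg (sub_nonneg.mpr hq) hmpos) hmpos,
        mul_nonneg (sub_nonneg.mpr hq) hnn,
        mul_nonneg (mul_nonneg (sub_nonneg.mpr hq) (sub_nonneg.mpr hq)) hnn,
        mul_nonneg (mul_nonneg (sub_nonneg.mpr hq) (sub_nonneg.mpr hq)) (sub_nonneg.mpr hq),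
        mul_nonneg (mul_nonneg (sub_nonneg.mpr hq) hmpos) hnn]
    have hcubic : 6*((((n:ℝ)+19)/20)^2*((n:ℝ)+((n:ℝ)+19)/20-1))
        ≤ ((3*(n:ℝ)+2)/100) * ((999/1000) * (n:ℝ)^2) := by
      nlinarith [mul_nonneg (mul_nonneg (sub_nonneg.mpr hnr) hnn) hnn,
        mul_nonneg (sub_nonneg.mpr hnr) hnn, sub_nonneg.mpr hnr, hnn]
    linarith
  have hmain : 6*α*(m:ℝ)^2 * (K:ℝ) ≤ (EW.card:ℝ) * (K:ℝ) := by
    have t1 : ((3*(n:ℝ)+2)/100) * ((999/1000) * (α * (n:ℝ)^2)) ≤ ((m:ℝ)-(d:ℝ)) * (SS.card:ℝ) := by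
      apply mul_le_mul hmdlb hS999 (by positivity) (by linarith [hmdlb])
    have t2 : 6*α*(m:ℝ)^2*(K:ℝ) ≤ ((3*(n:ℝ)+2)/100) * ((999/1000) * (α * (n:ℝ)^2)) := by
      calc 6*α*(m:ℝ)^2*(K:ℝ) = α * (6*(m:ℝ)^2*((n:ℝ)+(m:ℝ)-1)) := by rw [hKr]; ring
        _ ≤ α * (((3*(n:ℝ)+2)/100) * ((999/1000) * (n:ℝ)^2)) :=
            mul_le_mul_of_nonneg_left hpoly (le_of_lt hα)
        _ = ((3*(n:ℝ)+2)/100) * ((999/1000) * (α * (n:ℝ)^2)) := by ring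
    calc 6*α*(m:ℝ)^2*(K:ℝ) ≤ ((3*(n:ℝ)+2)/100) * ((999/1000) * (α * (n:ℝ)^2)) := t2
      _ ≤ ((m:ℝ)-(d:ℝ)) * (SS.card:ℝ) := t1
      _ = ((m-d:ℕ):ℝ) * (SS.card:ℝ) := by rw [hmd]
      _ ≤ (K:ℝ) * (EW.card:ℝ) := hcast
      _ = (EW.card:ℝ) * (K:ℝ) := by ring
  have hfin : 6*α*(m:ℝ)^2 ≤ (EW.card:ℝ) := le_of_mul_le_mul_right hmain hKpos
  have hEWr : (EW.card:ℝ) ≤ (backCount (fun i j : Fin m =>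
      T (σ ⟨a0 + (i:ℕ), by have := i.isLt; omega⟩)
        (σ ⟨a0 + (j:ℕ), by have := j.isLt; omega⟩)) τ : ℝ) := by
    exact_mod_cast le_trans hEWle hii
  exact le_trans hfin hEWr
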